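/- arXiv:2302.08083 — 2 statements merged into one kernel-verified Lean document; each statement's English description precedes it below -/
import Mathlib

section
/- Let m ≥ 2, A ≥ 1 an integer, and α, β distinct algebraic integers in ℤ[ζ_m] whose representations (as polynomials in ζ_m of degree less than φ(m) with integer coefficients) have all coefficients bounded in absolute value by A. Then |α − β| ≥ 1/(2A·φ(m) + 1)^{φ(m)−1}. -/
open scoped BigOperators

theorem algebraic_integer_separation {m : ℕ} (hm : 2 ≤ m) (ζ : ℂ)
    (hζ : IsPrimitiveRoot ζ m) (A : ℤ) (hA : 1 ≤ A)
    (a b : Fin (Nat.totient m) → ℤ)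
    (ha : ∀ i, |a i| ≤ A) (hb : ∀ i, |b i| ≤ A)
    (α β : ℂ) (hα : α = ∑ i : Fin (Nat.totient m), (a i : ℂ) * ζ ^ (i : ℕ))
    (hβ : β = ∑ i : Fin (Nat.totient m), (b i : ℂ) * ζ ^ (i : ℕ))
    (hne : α ≠ β) :
    1 / (2 * (A : ℝ) * Nat.totient m + 1) ^ (Nat.totient m - 1) ≤ ‖α - β‖ := by
  classical
  have hm0 : 0 < m := by omega
  have hn1 : 1 ≤ Nat.totient m := Nat.totient_pos.mpr hm0
  set m' : ℕ+ := ⟨m, hm0⟩ with hm'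
  haveI : NeZero (m' : ℕ) := ⟨m'.ne_zero⟩
  set K := CyclotomicField m' ℚ with hK
  haveI : IsCyclotomicExtension {(m' : ℕ)} ℚ K := CyclotomicField.isCyclotomicExtension m' ℚ
  set ζ' : K := IsCyclotomicExtension.zeta m' ℚ K with hζ'def
  have hζ' : IsPrimitiveRoot ζ' (m' : ℕ) := IsCyclotomicExtension.zeta_spec m' ℚ K
  have hirr : Irreducible (Polynomial.cyclotomic (m' : ℕ) ℚ) :=
    Polynomial.cyclotomic.irreducible_rat m'.pos
  haveI : FiniteDimensional ℚ K := IsCyclotomicExtension.finiteDimensional {(m' : ℕ)} ℚ K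
  have hζmem : ζ ∈ primitiveRoots (m' : ℕ) ℂ := (mem_primitiveRoots m'.pos).mpr hζ
  set σ₀ : K →ₐ[ℚ] ℂ := (hζ'.embeddingsEquivPrimitiveRoots ℂ hirr).symm ⟨ζ, hζmem⟩ with hσ₀def
  have hσ₀ : σ₀ ζ' = ζ := by
    have := (hζ'.embeddingsEquivPrimitiveRoots ℂ hirr).apply_symm_apply ⟨ζ, hζmem⟩
    rw [← hζ'.embeddingsEquivPrimitiveRoots_apply_coe ℂ hirr σ₀]
    exact congrArg Subtype.val this
  set c : Fin (Nat.totient m) → ℤ := fun i => a i - b i with hc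
  set x : K := ∑ i : Fin (Nat.totient m), (c i : K) * ζ' ^ (i : ℕ) with hx
  have hσx : ∀ σ : K →ₐ[ℚ] ℂ,
      σ x = ∑ i : Fin (Nat.totient m), (c i : ℂ) * (σ ζ') ^ (i : ℕ) := by
    intro σ
    rw [hx, map_sum]
    refine Finset.sum_congr rfl fun i _ => ?_
    rw [map_mul, map_pow, map_intCast]
  have hσ₀x : σ₀ x = α - β := by
    rw [hσx σ₀, hσ₀, hα, hβ, ← Finset.sum_sub_distrib]
    refine Finset.sum_congr rfl fun i _ => ?_
    simp only [hc]
    push_cast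
    ring
  have hx0 : x ≠ 0 := by
    intro h
    apply hne
    have h2 := hσ₀x
    rw [h, map_zero] at h2
    exact sub_eq_zero.mp h2.symm
  have hζint : IsIntegral ℤ ζ' := hζ'.isIntegral m'.pos
  have hxint : IsIntegral ℤ x := by
    refine IsIntegral.sum _ fun i _ => ?_
    have h1 : IsIntegral ℤ ((c i : K)) := by
      simpa using isIntegral_algebraMap (A := K) (x := c i)
    exact h1.mul (hζint.pow _)
  obtain ⟨N, hN⟩ : ∃ N : ℤ, algebraMap ℤ ℚ N = Algebra.norm ℚ x :=
    IsIntegrallyClosed.isIntegral_iff.mp (Algebra.isIntegral_norm ℚ hxint)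
  have hN0 : N ≠ 0 := by
    intro h
    rw [h, map_zero] at hN
    exact (Algebra.norm_ne_zero_iff.mpr hx0) hN.symm
  have hprod : (algebraMap ℚ ℂ) (Algebra.norm ℚ x) = ∏ σ : K →ₐ[ℚ] ℂ, σ x :=
    Algebra.norm_eq_prod_embeddings ℚ ℂ x
  have habs : (1 : ℝ) ≤ ∏ σ : K →ₐ[ℚ] ℂ, ‖σ x‖ := by
    have h1 : ((N : ℂ)) = ∏ σ : K →ₐ[ℚ] ℂ, σ x := by
      rw [← hprod, ← hN]; simp
    have h2 : ‖(N : ℂ)‖ = ∏ σ : K →ₐ[ℚ] ℂ, ‖σ x‖ := by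
      rw [h1, norm_prod]
    rw [← h2, Complex.norm_intCast]
    exact_mod_cast Int.one_le_abs hN0
  set B : ℝ := 2 * (A : ℝ) * Nat.totient m + 1 with hB
  have hA' : (1:ℝ) ≤ (A:ℝ) := by exact_mod_cast hA
  have hn' : (1:ℝ) ≤ (Nat.totient m : ℝ) := by exact_mod_cast hn1
  have hB1 : (1 : ℝ) ≤ B := by nlinarith
  have hbound : ∀ σ : K →ₐ[ℚ] ℂ, ‖σ x‖ ≤ B := by
    intro σ
    rw [hσx]
    have hroot : ‖σ ζ'‖ = 1 := by
      have hpow : (σ ζ') ^ m = 1 := by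
        rw [← map_pow]
        have : ζ' ^ m = 1 := hζ'.pow_eq_one
        rw [this, map_one]
      exact Complex.norm_eq_one_of_pow_eq_one hpow (by omega)
    calc ‖∑ i : Fin (Nat.totient m), (c i : ℂ) * (σ ζ') ^ (i : ℕ)‖
        ≤ ∑ i : Fin (Nat.totient m), ‖(c i : ℂ) * (σ ζ') ^ (i : ℕ)‖ :=
          norm_sum_le _ _
      _ ≤ ∑ _i : Fin (Nat.totient m), 2 * (A : ℝ) := by
          refine Finset.sum_le_sum fun i _ => ?_
          rw [norm_mul, norm_pow, hroot, one_pow, mul_one, Complex.norm_intCast]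
          have hci : |c i| ≤ 2 * A := by
            calc |c i| = |a i - b i| := by rw [hc]
              _ ≤ |a i| + |b i| := abs_sub _ _
              _ ≤ 2 * A := by linarith [ha i, hb i]
          exact_mod_cast hci
      _ = (Nat.totient m : ℝ) * (2 * (A : ℝ)) := by
          rw [Finset.sum_const, Finset.card_univ, Fintype.card_fin, nsmul_eq_mul]
      _ ≤ B := by rw [hB]; nlinarith
  have hcard : Fintype.card (K →ₐ[ℚ] ℂ) = Nat.totient m := by
    rw [AlgHom.card, IsCyclotomicExtension.finrank K hirr]; rfl
  have key : (1:ℝ) ≤ ‖α - β‖ * B ^ (Nat.totient m - 1) := by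
    have hsplit : ∏ σ : K →ₐ[ℚ] ℂ, ‖σ x‖
        = ‖σ₀ x‖ * ∏ σ ∈ Finset.univ.erase σ₀, ‖σ x‖ :=
      (Finset.mul_prod_erase _ _ (Finset.mem_univ σ₀)).symm
    have herased : ∏ σ ∈ Finset.univ.erase σ₀, ‖σ x‖
        ≤ B ^ (Nat.totient m - 1) := by
      have h1 : ∏ σ ∈ Finset.univ.erase σ₀, ‖σ x‖
          ≤ ∏ _σ ∈ Finset.univ.erase σ₀, B :=
        Finset.prod_le_prod (fun σ _ => norm_nonneg _) (fun σ _ => hbound σ)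
      rw [Finset.prod_const, Finset.card_erase_of_mem (Finset.mem_univ σ₀),
        Finset.card_univ, hcard] at h1
      exact h1
    calc (1:ℝ) ≤ ∏ σ : K →ₐ[ℚ] ℂ, ‖σ x‖ := habs
      _ = ‖σ₀ x‖ * ∏ σ ∈ Finset.univ.erase σ₀, ‖σ x‖ := hsplit
      _ ≤ ‖α - β‖ * B ^ (Nat.totient m - 1) := by
          rw [hσ₀x]
          exact mul_le_mul_of_nonneg_left herased (norm_nonneg _)
  rw [div_le_iff₀ (by positivity)]
  linarith [key]
end

section
/- For X an n×n matrix with i.i.d. standard complex Gaussian entries and z on the unit circle, E[|Per_z(X)|⁴] ≤ E[|Per(X)|⁴], where Per = Per_1 is the ordinary permanent. -/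
open scoped BigOperators
open MeasureTheory ProbabilityTheory

def invNum {n : ℕ} (σ : Equiv.Perm (Fin n)) : ℕ :=
  (Finset.univ.filter (fun p : Fin n × Fin n => p.1 < p.2 ∧ σ p.2 < σ p.1)).card

noncomputable def perz {n : ℕ} (z : ℂ) (X : Matrix (Fin n) (Fin n) ℂ) : ℂ :=
  ∑ σ : Equiv.Perm (Fin n), z ^ invNum σ * ∏ i, X i (σ i)

/-- The standard complex Gaussian distribution: real and imaginary parts are independent
real Gaussians of mean `0` and variance `1/2`. -/
noncomputable def stdComplexGaussian : Measure ℂ :=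
  ((gaussianReal 0 (1 / 2)).prod (gaussianReal 0 (1 / 2))).map
    (fun p => (p.1 : ℂ) + p.2 * Complex.I)

section Helpers
lemma measurable_mk' : Measurable (fun p : ℝ × ℝ => (p.1 : ℂ) + p.2 * Complex.I) := by
  fun_prop

instance : IsProbabilityMeasure stdComplexGaussian :=
  Measure.isProbabilityMeasure_map measurable_mk'.aemeasurable

lemma integrable_pow_gaussian (k : ℕ) :
    Integrable (fun x : ℝ => x ^ k) (gaussianReal 0 (1/2)) := by
  rw [gaussianReal_of_var_ne_zero 0 (by norm_num)]
  rw [integrable_withDensity_iff (measurable_gaussianPDF 0 (1/2))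
    (Filter.Eventually.of_forall (fun x => ENNReal.ofReal_lt_top))]
  have h := ((integrable_rpow_mul_exp_neg_mul_sq (b := 1) one_pos
      (by exact_mod_cast neg_one_lt_zero.trans_le (Nat.cast_nonneg k) : (-1:ℝ) < (k:ℝ)))).const_mul
      ((Real.sqrt (2 * Real.pi * ((1:ℝ)/2)))⁻¹)
  refine h.congr (Filter.Eventually.of_forall (fun x => ?_))
  simp only [ProbabilityTheory.gaussianPDF_def,
    ENNReal.toReal_ofReal (gaussianPDFReal_nonneg _ _ _),
    ProbabilityTheory.gaussianPDFReal, Real.rpow_natCast]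
  push_cast
  norm_num
  rw [ENNReal.toReal_ofReal (by positivity)]
  ring

lemma stdCG_integrable_abs_pow :
    Integrable (fun w : ℂ => ‖w‖ ^ 4) stdComplexGaussian := by
  unfold stdComplexGaussian
  rw [integrable_map_measure (by fun_prop : Measurable (fun w : ℂ => ‖w‖ ^ 4)).aestronglyMeasurable
    measurable_mk'.aemeasurable]
  have h1 : Integrable (fun p : ℝ × ℝ => (p.1 ^ 4) * (1:ℝ))
      ((gaussianReal 0 (1/2)).prod (gaussianReal 0 (1/2))) :=
    (integrable_pow_gaussian 4).mul_prod (integrable_const 1)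
  have h2 : Integrable (fun p : ℝ × ℝ => (p.1 ^ 2) * (p.2 ^ 2))
      ((gaussianReal 0 (1/2)).prod (gaussianReal 0 (1/2))) :=
    (integrable_pow_gaussian 2).mul_prod (integrable_pow_gaussian 2)
  have h3 : Integrable (fun p : ℝ × ℝ => (1:ℝ) * (p.2 ^ 4))
      ((gaussianReal 0 (1/2)).prod (gaussianReal 0 (1/2))) :=
    (integrable_const 1).mul_prod (integrable_pow_gaussian 4)
  have h := (h1.add (h2.const_mul 2)).add h3
  refine h.congr (Filter.Eventually.of_forall (fun p => ?_))
  have habs : ‖(p.1 : ℂ) + p.2 * Complex.I‖ = Real.sqrt (p.1 ^ 2 + p.2 ^ 2) := by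
    rw [Complex.norm_def, Complex.normSq_add_mul_I]
  simp only [Function.comp_apply, habs, Pi.add_apply]
  have hs : Real.sqrt (p.1 ^ 2 + p.2 ^ 2) ^ 4 = (p.1 ^ 2 + p.2 ^ 2) ^ 2 := by
    rw [show (4 : ℕ) = 2 * 2 by norm_num, pow_mul,
      Real.sq_sqrt (by positivity : (0:ℝ) ≤ p.1 ^ 2 + p.2 ^ 2)]
  rw [hs]
  ring

lemma measurable_conj' : Measurable (fun z : ℂ => (starRingEnd ℂ) z) := by
  have h := Complex.conjLIE.continuous.measurable
  have he : (fun z : ℂ => (starRingEnd ℂ) z) = fun z : ℂ => Complex.conjLIE z := by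
    funext z; rw [Complex.conjLIE_apply]
  rw [he]; exact h

lemma stdCG_integrable_mom {a b : ℕ} (h : a + b ≤ 4) :
    Integrable (fun w : ℂ => w ^ a * (starRingEnd ℂ w) ^ b) stdComplexGaussian := by
  have hmeas : Measurable (fun w : ℂ => w ^ a * (starRingEnd ℂ w) ^ b) :=
    (measurable_id.pow_const a).mul (measurable_conj'.pow_const b)
  refine Integrable.mono' ((integrable_const (1:ℝ)).add stdCG_integrable_abs_pow)
    hmeas.aestronglyMeasurable (Filter.Eventually.of_forall (fun w => ?_))
  have hn : ‖w ^ a * (starRingEnd ℂ w) ^ b‖ = ‖w‖ ^ (a + b) := by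
    simp [pow_add, Complex.norm_conj, norm_mul, norm_pow]
  rw [hn]
  simp only [Pi.add_apply]
  rcases le_or_gt ‖w‖ 1 with hw | hw
  · have : ‖w‖ ^ (a+b) ≤ 1 := pow_le_one₀ (norm_nonneg w) hw
    have h4 : (0:ℝ) ≤ ‖w‖ ^ 4 := by positivity
    linarith
  · have : ‖w‖ ^ (a+b) ≤ ‖w‖ ^ 4 :=
      pow_le_pow_right₀ hw.le h
    linarith

lemma stdCG_map_mul_I :
    stdComplexGaussian.map (fun w => Complex.I * w) = stdComplexGaussian := by
  unfold stdComplexGaussian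
  rw [Measure.map_map (measurable_const_mul _) measurable_mk']
  have h1 : (fun w => Complex.I * w) ∘ (fun p : ℝ × ℝ => (p.1:ℂ) + p.2*Complex.I)
      = (fun p : ℝ × ℝ => (p.1:ℂ) + p.2*Complex.I) ∘ (fun p : ℝ × ℝ => (-p.2, p.1)) := by
    funext p
    simp only [Function.comp_apply]
    push_cast
    linear_combination (p.2:ℂ) * Complex.I_mul_I
  rw [h1, ← Measure.map_map measurable_mk' (by fun_prop)]
  congr 1
  have h2 : (fun p : ℝ × ℝ => (-p.2, p.1))
      = (Prod.map (fun x : ℝ => -x) (id : ℝ → ℝ)) ∘ Prod.swap := rfl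
  rw [h2, ← Measure.map_map (measurable_neg.prodMap measurable_id) measurable_swap,
    Measure.prod_swap, ← Measure.map_prod_map _ _ measurable_neg measurable_id,
    Measure.map_id]
  congr 1
  rw [show (Neg.neg : ℝ → ℝ) = (fun x : ℝ => (-1:ℝ) * x) by funext x; ring]
  have h4 := gaussianReal_map_const_mul (μ := 0) (v := 1/2) (-1)
  simp only [mul_zero] at h4
  convert h4 using 2
  ext
  norm_num

lemma stdCG_mom_eq_zero {a b : ℕ} (ha : a ≤ 2) (hb : b ≤ 2) (hab : a ≠ b) :
    ∫ w, w ^ a * (starRingEnd ℂ w) ^ b ∂stdComplexGaussian = 0 := by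
  have hmeas : Measurable (fun w : ℂ => w ^ a * (starRingEnd ℂ w) ^ b) :=
    (measurable_id.pow_const a).mul (measurable_conj'.pow_const b)
  set m := ∫ w, w ^ a * (starRingEnd ℂ w) ^ b ∂stdComplexGaussian with hm
  have key : m = (Complex.I ^ a * (-Complex.I) ^ b) * m := by
    conv_lhs => rw [hm, ← stdCG_map_mul_I]
    rw [integral_map (measurable_const_mul _).aemeasurable
        (by rw [stdCG_map_mul_I]; exact hmeas.aestronglyMeasurable)]
    rw [← integral_const_mul]
    congr 1; funext w
    simp only [map_mul, Complex.conj_I, mul_pow]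
    ring
  have hc : Complex.I ^ a * (-Complex.I) ^ b ≠ 1 := by
    interval_cases a <;> interval_cases b <;>
      first
        | exact absurd rfl hab
        | norm_num [pow_succ, Complex.ext_iff]
  have h0 : (1 - Complex.I ^ a * (-Complex.I) ^ b) * m = 0 := by
    rw [sub_mul, one_mul, ← key, sub_self]
  rcases mul_eq_zero.mp h0 with h | h
  · exact absurd (by linear_combination -h : Complex.I ^ a * (-Complex.I) ^ b = 1) hc
  · exact h

lemma stdCG_mom_diag (a : ℕ) :
    ∃ r : ℝ, 0 ≤ r ∧ ∫ w, w ^ a * (starRingEnd ℂ w) ^ a ∂stdComplexGaussian = (r : ℂ) := by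
  refine ⟨∫ w, Complex.normSq w ^ a ∂stdComplexGaussian,
    integral_nonneg (fun w => pow_nonneg (Complex.normSq_nonneg w) a), ?_⟩
  have h1 : ∫ w, ((Complex.normSq w ^ a : ℝ) : ℂ) ∂stdComplexGaussian
      = ((∫ w, Complex.normSq w ^ a ∂stdComplexGaussian : ℝ) : ℂ) := integral_ofReal
  rw [← h1]
  congr 1; funext w
  rw [← mul_pow, Complex.mul_conj]
  norm_cast

lemma stdCG_mom (a b : ℕ) (ha : a ≤ 2) (hb : b ≤ 2) :
    ∃ r : ℝ, 0 ≤ r ∧ ∫ w, w ^ a * (starRingEnd ℂ w) ^ b ∂stdComplexGaussian = (r : ℂ) := by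
  rcases eq_or_ne a b with rfl | hab
  · exact stdCG_mom_diag a
  · exact ⟨0, le_refl 0, by rw [stdCG_mom_eq_zero ha hb hab]; simp⟩

lemma indepFun_integral_mul_complex {Ω : Type*} [MeasurableSpace Ω] {μ : Measure Ω}
    [IsProbabilityMeasure μ] {X Y : Ω → ℂ} (h : IndepFun X Y μ)
    (hX : Integrable X μ) (hY : Integrable Y μ) :
    ∫ ω, X ω * Y ω ∂μ = (∫ ω, X ω ∂μ) * ∫ ω, Y ω ∂μ := by
  have hXm : AEMeasurable X μ := hX.1.aemeasurable
  have hYm : AEMeasurable Y μ := hY.1.aemeasurable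
  rw [indepFun_iff_map_prod_eq_prod_map_map hXm hYm] at h
  have h1 : ∫ ω, X ω * Y ω ∂μ = ∫ p : ℂ × ℂ, p.1 * p.2 ∂(μ.map (fun ω => (X ω, Y ω))) := by
    rw [integral_map (hXm.prodMk hYm)
      (by fun_prop : Measurable (fun p : ℂ × ℂ => p.1 * p.2)).aestronglyMeasurable]
  have h2 : ∫ ω, X ω ∂μ = ∫ x : ℂ, x ∂(μ.map X) :=
    (integral_map hXm aestronglyMeasurable_id).symm
  have h3 : ∫ ω, Y ω ∂μ = ∫ x : ℂ, x ∂(μ.map Y) :=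
    (integral_map hYm aestronglyMeasurable_id).symm
  rw [h1, h, h2, h3, ← integral_prod_mul (fun x : ℂ => x) (fun x : ℂ => x)]

lemma iIndep_integral_prod {ι Ω : Type*} [MeasurableSpace Ω] {μ : Measure Ω}
    [IsProbabilityMeasure μ] {f : ι → Ω → ℂ}
    (hind : iIndepFun f μ) (hm : ∀ i, Measurable (f i))
    (hint : ∀ i, Integrable (f i) μ) (s : Finset ι) :
    Integrable (fun ω => ∏ i ∈ s, f i ω) μ ∧
      ∫ ω, ∏ i ∈ s, f i ω ∂μ = ∏ i ∈ s, ∫ ω, f i ω ∂μ := by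
  classical
  refine Finset.induction_on s ?_ ?_
  · simp
  · intro a t ha ih
    have hprod : (fun ω => ∏ i ∈ insert a t, f i ω) = (fun ω => f a ω * ∏ i ∈ t, f i ω) := by
      funext ω; exact Finset.prod_insert ha
    have hP : (∏ i ∈ t, f i) = (fun ω => ∏ i ∈ t, f i ω) := by
      funext ω; exact Finset.prod_apply ω t f
    have hI : IndepFun (f a) (fun ω => ∏ i ∈ t, f i ω) μ := by
      have := (hind.indepFun_finset_prod_of_notMem hm ha).symm
      rwa [hP] at this
    constructor
    · rw [hprod]
      exact hI.integrable_mul (hint a) ih.1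
    · rw [hprod, Finset.prod_insert ha, ← ih.2]
      exact indepFun_integral_mul_complex hI (hint a) ih.1

end Helpers

/-- The exponent of entry `p` in the monomial `∏ i, M i (σ i)`. -/
def eexp {n : ℕ} (σ : Equiv.Perm (Fin n)) (p : Fin n × Fin n) : ℕ :=
  if σ p.1 = p.2 then 1 else 0

lemma eexp_le_one {n : ℕ} (σ : Equiv.Perm (Fin n)) (p : Fin n × Fin n) : eexp σ p ≤ 1 := by
  unfold eexp; split <;> norm_num

lemma prod_perm_eq {n : ℕ} (σ : Equiv.Perm (Fin n)) (M : Matrix (Fin n) (Fin n) ℂ) :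
    ∏ i, M i (σ i) = ∏ p : Fin n × Fin n, M p.1 p.2 ^ eexp σ p := by
  symm
  rw [Fintype.prod_prod_type]
  apply Finset.prod_congr rfl
  intro i _
  have : ∀ b : Fin n, M i b ^ eexp σ (i, b) = if σ i = b then M i b else 1 := by
    intro b; unfold eexp; split <;> simp
  simp only [this]
  simp [Finset.prod_ite_eq]

theorem perz_fourth_moment_le {n : ℕ} {Ω : Type*} [MeasurableSpace Ω]
    (μ : Measure Ω) [IsProbabilityMeasure μ]
    (X : Ω → Matrix (Fin n) (Fin n) ℂ)
    (hmeas : ∀ i j, Measurable (fun ω => X ω i j))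
    (hindep : iIndepFun (fun (p : Fin n × Fin n) ω => X ω p.1 p.2) μ)
    (hdist : ∀ i j, μ.map (fun ω => X ω i j) = stdComplexGaussian)
    (z : ℂ) (hz : ‖z‖ = 1) :
    ∫ ω, ‖perz z (X ω)‖ ^ 4 ∂μ ≤
      ∫ ω, ‖perz 1 (X ω)‖ ^ 4 ∂μ := by
  classical
  set Pn := Equiv.Perm (Fin n)
  -- entry exponents for a quadruple of permutations
  let A : (Pn × Pn × Pn × Pn) → (Fin n × Fin n) → ℕ :=
    fun q p => eexp q.2.2.2 p + eexp q.2.2.1 p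
  let B : (Pn × Pn × Pn × Pn) → (Fin n × Fin n) → ℕ :=
    fun q p => eexp q.2.1 p + eexp q.1 p
  let T : (Pn × Pn × Pn × Pn) → Ω → ℂ :=
    fun q ω => ∏ p : Fin n × Fin n,
      (X ω p.1 p.2) ^ A q p * (starRingEnd ℂ (X ω p.1 p.2)) ^ B q p
  let c : ℂ → (Pn × Pn × Pn × Pn) → ℂ :=
    fun z' q => z' ^ invNum q.2.2.2 * z' ^ invNum q.2.2.1 *
      (starRingEnd ℂ z') ^ invNum q.2.1 * (starRingEnd ℂ z') ^ invNum q.1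
  have hent : ∀ p : Fin n × Fin n, Measurable (fun ω => X ω p.1 p.2) :=
    fun p => hmeas p.1 p.2
  have hA2 : ∀ q p, A q p ≤ 2 := fun q p => add_le_add (eexp_le_one _ _) (eexp_le_one _ _)
  have hB2 : ∀ q p, B q p ≤ 2 := fun q p => add_le_add (eexp_le_one _ _) (eexp_le_one _ _)
  -- key facts about each T q
  have hTkey : ∀ q : Pn × Pn × Pn × Pn, Integrable (T q) μ ∧
      ∃ r : ℝ, 0 ≤ r ∧ ∫ ω, T q ω ∂μ = (r : ℂ) := by
    intro q
    have hgmeas : ∀ p : Fin n × Fin n,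
        Measurable (fun w : ℂ => w ^ A q p * (starRingEnd ℂ w) ^ B q p) :=
      fun p => (measurable_id.pow_const _).mul (measurable_conj'.pow_const _)
    have hind2 : iIndepFun
        (fun (p : Fin n × Fin n) ω => (X ω p.1 p.2) ^ A q p * (starRingEnd ℂ (X ω p.1 p.2)) ^ B q p) μ :=
      hindep.comp _ hgmeas
    have hfint : ∀ p : Fin n × Fin n, Integrable
        (fun ω => (X ω p.1 p.2) ^ A q p * (starRingEnd ℂ (X ω p.1 p.2)) ^ B q p) μ := by
      intro p
      have hab : A q p + B q p ≤ 4 := by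
        have h1 := hA2 q p
        have h2 := hB2 q p
        omega
      have h1 : Integrable (fun w : ℂ => w ^ A q p * (starRingEnd ℂ w) ^ B q p)
          stdComplexGaussian := stdCG_integrable_mom hab
      have hsm : AEStronglyMeasurable (fun w : ℂ => w ^ A q p * (starRingEnd ℂ w) ^ B q p)
          (μ.map (fun ω => X ω p.1 p.2)) := (hgmeas p).aestronglyMeasurable
      rw [← hdist p.1 p.2] at h1
      exact (integrable_map_measure hsm (hent p).aemeasurable).mp h1
    obtain ⟨hTint, hTval⟩ := iIndep_integral_prod hind2
      (fun p => (hgmeas p).comp (hent p)) hfint Finset.univ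
    refine ⟨hTint, ?_⟩
    have hfval : ∀ p : Fin n × Fin n, ∃ r : ℝ, 0 ≤ r ∧
        ∫ ω, (X ω p.1 p.2) ^ A q p * (starRingEnd ℂ (X ω p.1 p.2)) ^ B q p ∂μ = (r : ℂ) := by
      intro p
      obtain ⟨r, hr0, hrv⟩ := stdCG_mom (A q p) (B q p) (hA2 q p) (hB2 q p)
      refine ⟨r, hr0, ?_⟩
      have hsm : AEStronglyMeasurable (fun w : ℂ => w ^ A q p * (starRingEnd ℂ w) ^ B q p)
          (μ.map (fun ω => X ω p.1 p.2)) := (hgmeas p).aestronglyMeasurable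
      rw [← hrv, ← hdist p.1 p.2, integral_map (hent p).aemeasurable hsm]
    choose r hr0 hrv using hfval
    refine ⟨∏ p : Fin n × Fin n, r p,
      Finset.prod_nonneg (fun p _ => hr0 p), ?_⟩
    rw [hTval, Finset.prod_congr rfl (fun p _ => hrv p)]
    push_cast
    rfl
  have hTint : ∀ q, Integrable (T q) μ := fun q => (hTkey q).1
  choose R hR0 hRval using (fun q => (hTkey q).2)
  -- the expansion of the fourth moment
  have hexp : ∀ z' : ℂ, ((∫ ω, ‖perz z' (X ω)‖ ^ 4 ∂μ : ℝ) : ℂ)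
      = ∑ q : Pn × Pn × Pn × Pn, c z' q * (R q : ℂ) := by
    intro z'
    have hof : ∫ ω, ((‖perz z' (X ω)‖ ^ 4 : ℝ) : ℂ) ∂μ
        = ((∫ ω, ‖perz z' (X ω)‖ ^ 4 ∂μ : ℝ) : ℂ) := integral_ofReal
    rw [← hof]
    have h4 : ∀ w : ℂ, ((‖w‖ ^ 4 : ℝ) : ℂ)
        = w * w * starRingEnd ℂ w * starRingEnd ℂ w := by
      intro w
      have habs : (‖w‖ : ℝ) ^ 4 = Complex.normSq w ^ 2 := by
        rw [show (4:ℕ) = 2*2 by norm_num, pow_mul, Complex.sq_norm]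
      rw [habs]
      push_cast
      rw [← Complex.mul_conj]
      ring
    have hexp4 : ∀ u v : Pn → ℂ,
        (∑ σ : Pn, u σ) * (∑ σ : Pn, u σ) * (∑ σ : Pn, v σ) * (∑ σ : Pn, v σ)
        = ∑ q : Pn × Pn × Pn × Pn, u q.2.2.2 * u q.2.2.1 * v q.2.1 * v q.1 := by
      intro u v
      simp only [Fintype.sum_prod_type, Finset.sum_mul, Finset.mul_sum]
    have hpt : ∀ ω, ((‖perz z' (X ω)‖ ^ 4 : ℝ) : ℂ)
        = ∑ q : Pn × Pn × Pn × Pn, c z' q * T q ω := by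
      intro ω
      rw [h4]
      unfold perz
      rw [map_sum]
      simp only [map_mul, map_pow]
      rw [hexp4 (fun σ => z' ^ invNum σ * ∏ i, X ω i (σ i))
        (fun σ => (starRingEnd ℂ z') ^ invNum σ * starRingEnd ℂ (∏ i, X ω i (σ i)))]
      apply Finset.sum_congr rfl
      intro q _
      have hTq : T q ω = (∏ i, X ω i (q.2.2.2 i)) * (∏ i, X ω i (q.2.2.1 i)) *
          starRingEnd ℂ (∏ i, X ω i (q.2.1 i)) * starRingEnd ℂ (∏ i, X ω i (q.1 i)) := by
        rw [map_prod, map_prod, prod_perm_eq q.2.2.2, prod_perm_eq q.2.2.1,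
          prod_perm_eq q.2.1 (fun i j => starRingEnd ℂ (X ω i j)),
          prod_perm_eq q.1 (fun i j => starRingEnd ℂ (X ω i j)),
          ← Finset.prod_mul_distrib, ← Finset.prod_mul_distrib, ← Finset.prod_mul_distrib]
        apply Finset.prod_congr rfl
        intro p _
        show (X ω p.1 p.2) ^ A q p * (starRingEnd ℂ (X ω p.1 p.2)) ^ B q p = _
        simp only [A, B, pow_add]
        ring
      rw [hTq]
      simp only [c]
      ring
    rw [integral_congr_ae (Filter.Eventually.of_forall hpt),
      integral_finset_sum _ (fun q _ => (hTint q).const_mul (c z' q))]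
    apply Finset.sum_congr rfl
    intro q _
    rw [integral_const_mul, hRval q]
  -- conclude
  have hz1 : ∀ q, c 1 q = 1 := by
    intro q; simp only [c, map_one, one_pow, one_mul]
  have h1 : ∫ ω, ‖perz 1 (X ω)‖ ^ 4 ∂μ = ∑ q : Pn × Pn × Pn × Pn, R q := by
    have := hexp 1
    simp only [hz1, one_mul] at this
    rw [← Complex.ofReal_sum] at this
    exact_mod_cast this
  have hzre : ∫ ω, ‖perz z (X ω)‖ ^ 4 ∂μ
      = ∑ q : Pn × Pn × Pn × Pn, (c z q).re * R q := by
    have := congrArg Complex.re (hexp z)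
    rw [Complex.ofReal_re] at this
    rw [this, Complex.re_sum]
    apply Finset.sum_congr rfl
    intro q _
    simp [Complex.mul_re]
  rw [hzre, h1]
  apply Finset.sum_le_sum
  intro q _
  have habs : ‖c z q‖ = 1 := by
    simp only [c, norm_mul, norm_pow, Complex.norm_conj, hz, one_pow, one_mul]
  have hre : (c z q).re ≤ 1 := by
    calc (c z q).re ≤ ‖c z q‖ := Complex.re_le_norm _
    _ = 1 := habs
  calc (c z q).re * R q ≤ 1 * R q := mul_le_mul_of_nonneg_right hre (hR0 q)
  _ = R q := one_mul _
end
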